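/- Let M be a matroid on finite ground set E with rank function r, and let T denote the subset-expansion Tutte polynomial T_N(x, y) = Σ_{A ⊆ E(N)} (x − 1)^{r_N(E(N)) − r_N(A)} (y − 1)^{|A| − r_N(A)}. Then the convolution formula holds: T_M(x, y) = Σ_{A ⊆ E} T_{M|A}(0, y) · T_{M/A}(x, 0), where M|A is the restriction of M to A and M/A is the contraction of M by A. -/

import Mathlib

/-- A matroid given by a rank function on subsets of a finite ground set. -/
structure FinMatroid (α : Type*) [DecidableEq α] where
  E : Finset α
  r : Finset α → ℕ
  rank_empty : r ∅ = 0
  rank_insert : ∀ A ⊆ E, ∀ e ∈ E, r (insert e A) = r A ∨ r (insert e A) = r A + 1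
  rank_local : ∀ A ⊆ E, ∀ e ∈ E, ∀ f ∈ E,
    r (insert e A) = r A → r (insert f A) = r A → r (insert f (insert e A)) = r A

/-- Subset-expansion Tutte polynomial of a ground set `E` with rank function `rk`,
evaluated at `(x, y)`. -/
def tutteSum {α : Type*} [DecidableEq α] (E : Finset α) (rk : Finset α → ℕ)
    (x y : ℤ) : ℤ :=
  ∑ A ∈ E.powerset, (x - 1) ^ (rk E - rk A) * (y - 1) ^ (A.card - rk A)

section Aux
variable {α : Type*} [DecidableEq α]

lemma neg_one_pow_sub {a b : ℕ} (h : b ≤ a) :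
    ((-1 : ℤ)) ^ (a - b) = (-1) ^ a * (-1) ^ b := by
  have h2 : ((-1:ℤ))^b * ((-1:ℤ))^b = 1 := by
    rw [← pow_add, ← two_mul, pow_mul]; norm_num
  calc ((-1:ℤ))^(a-b) = ((-1:ℤ))^(a-b) * (((-1:ℤ))^b * (-1)^b) := by rw [h2, mul_one]
    _ = (-1)^a * ((-1:ℤ))^b := by
        rw [← mul_assoc, ← pow_add, Nat.sub_add_cancel h]

lemma neg_one_pow_congr_mod2 {n m : ℕ} (h : n % 2 = m % 2) : ((-1:ℤ))^n = (-1)^m := by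
  rcases Nat.even_or_odd n with he | ho
  · rw [Nat.even_iff] at he
    rw [(Nat.even_iff.2 he).neg_one_pow, (Nat.even_iff.2 (by omega)).neg_one_pow]
  · rw [Nat.odd_iff] at ho
    rw [(Nat.odd_iff.2 ho).neg_one_pow, (Nat.odd_iff.2 (by omega)).neg_one_pow]

lemma powerset_filter_subset {A E : Finset α} (hA : A ⊆ E) :
    E.powerset.filter (· ⊆ A) = A.powerset := by
  ext B
  simp only [Finset.mem_filter, Finset.mem_powerset]
  exact ⟨fun h => h.2, fun h => ⟨h.trans hA, h⟩⟩

lemma alt_sum {E B C : Finset α} (hC : C ⊆ E) (hBC : B ⊆ C) :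
    (∑ A ∈ E.powerset, if B ⊆ A ∧ A ⊆ C then (-1:ℤ)^A.card else 0)
      = if B = C then (-1:ℤ)^B.card else 0 := by
  rw [← Finset.sum_filter]
  have hb : ∑ A ∈ E.powerset.filter (fun A => B ⊆ A ∧ A ⊆ C), (-1:ℤ)^A.card
      = ∑ D ∈ (C \ B).powerset, (-1:ℤ)^(B.card + D.card) := by
    refine Finset.sum_nbij' (fun A => A \ B) (fun D => B ∪ D) ?_ ?_ ?_ ?_ ?_
    · intro A hA
      rw [Finset.mem_filter] at hA
      exact Finset.mem_powerset.2 (Finset.sdiff_subset_sdiff hA.2.2 le_rfl)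
    · intro D hD
      rw [Finset.mem_powerset] at hD
      refine Finset.mem_filter.2 ⟨Finset.mem_powerset.2 ?_, Finset.subset_union_left, ?_⟩
      · exact Finset.union_subset (hBC.trans hC) ((hD.trans (Finset.sdiff_subset)).trans hC)
      · exact Finset.union_subset hBC (hD.trans Finset.sdiff_subset)
    · intro A hA
      rw [Finset.mem_filter] at hA
      exact Finset.union_sdiff_of_subset hA.2.1
    · intro D hD
      rw [Finset.mem_powerset] at hD
      exact Finset.union_sdiff_cancel_left ((Finset.sdiff_disjoint.mono_left hD).symm)
    · intro A hA
      rw [Finset.mem_filter] at hA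
      have hcard := Finset.card_le_card hA.2.1
      congr 1
      rw [Finset.card_sdiff_of_subset hA.2.1]
      omega
  rw [hb]
  simp only [pow_add, ← Finset.mul_sum, Finset.sum_powerset_neg_one_pow_card,
    Finset.sdiff_eq_empty_iff_subset]
  by_cases h : B = C
  · subst h; simp
  · rw [if_neg (fun hCB => h (Finset.Subset.antisymm hBC hCB)), if_neg h, mul_zero]

lemma alt_sum' {E B C : Finset α} (hC : C ⊆ E) :
    (∑ A ∈ E.powerset, if B ⊆ A ∧ A ⊆ C then (-1:ℤ)^A.card else 0)
      = if B = C then (-1:ℤ)^B.card else 0 := by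
  by_cases hBC : B ⊆ C
  · exact alt_sum hC hBC
  · rw [if_neg (by rintro rfl; exact hBC le_rfl)]
    exact Finset.sum_eq_zero fun A _ => if_neg (fun h => hBC (h.1.trans h.2))
end Aux

namespace FinMatroid
variable {α : Type*} [DecidableEq α] (M : FinMatroid α)

lemma r_union_le_add_card : ∀ (C : Finset α), C ⊆ M.E → ∀ A ⊆ M.E,
    M.r (A ∪ C) ≤ M.r A + C.card := by
  intro C
  induction C using Finset.induction_on with
  | empty => intro _ A _; simp
  | @insert e C hnot ih =>
    intro hC A hA
    have heE : e ∈ M.E := hC (Finset.mem_insert_self _ _)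
    have hCE : C ⊆ M.E := (Finset.subset_insert _ _).trans hC
    have h1 : A ∪ insert e C = insert e (A ∪ C) := by
      ext z; simp [Finset.mem_insert, Finset.mem_union]
    have hAC : A ∪ C ⊆ M.E := Finset.union_subset hA hCE
    have h2 := M.rank_insert (A ∪ C) hAC e heE
    have h3 := ih hCE A hA
    rw [h1, Finset.card_insert_of_notMem hnot]
    omega

lemma r_le_union : ∀ (C : Finset α), C ⊆ M.E → ∀ A ⊆ M.E,
    M.r A ≤ M.r (A ∪ C) := by
  intro C
  induction C using Finset.induction_on with
  | empty => intro _ A _; simp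
  | @insert e C hnot ih =>
    intro hC A hA
    have heE : e ∈ M.E := hC (Finset.mem_insert_self _ _)
    have hCE : C ⊆ M.E := (Finset.subset_insert _ _).trans hC
    have h1 : A ∪ insert e C = insert e (A ∪ C) := by
      ext z; simp [Finset.mem_insert, Finset.mem_union]
    have hAC : A ∪ C ⊆ M.E := Finset.union_subset hA hCE
    have h2 := M.rank_insert (A ∪ C) hAC e heE
    have h3 := ih hCE A hA
    rw [h1]
    omega

lemma r_mono {A B : Finset α} (hAB : A ⊆ B) (hB : B ⊆ M.E) : M.r A ≤ M.r B := by
  have := M.r_le_union B hB A (hAB.trans hB)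
  rwa [Finset.union_eq_right.2 hAB] at this

end FinMatroid

theorem tutte_convolution {α : Type*} [DecidableEq α] (M : FinMatroid α) (x y : ℤ) :
    tutteSum M.E M.r x y =
      ∑ A ∈ M.E.powerset,
        tutteSum A M.r 0 y *
          tutteSum (M.E \ A) (fun B => M.r (B ∪ A) - M.r A) x 0 := by
  classical
  set g : Finset α → Finset α → ℤ := fun B C =>
    (-1:ℤ)^(M.r B + M.r C + C.card) *
      ((y-1)^(B.card - M.r B) * (x-1)^(M.r M.E - M.r C)) with hg
  have key : ∀ A ∈ M.E.powerset,
      tutteSum A M.r 0 y * tutteSum (M.E \ A) (fun B => M.r (B ∪ A) - M.r A) x 0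
      = ∑ B ∈ M.E.powerset, ∑ C ∈ M.E.powerset,
          (if B ⊆ A ∧ A ⊆ C then (-1:ℤ)^A.card * g B C else 0) := by
    intro A hA
    rw [Finset.mem_powerset] at hA
    calc tutteSum A M.r 0 y * tutteSum (M.E \ A) (fun B => M.r (B ∪ A) - M.r A) x 0
        = ∑ B ∈ A.powerset, ∑ C' ∈ (M.E \ A).powerset,
            ((0 - 1:ℤ) ^ (M.r A - M.r B) * (y - 1) ^ (B.card - M.r B)) *
            ((x - 1) ^ ((M.r ((M.E \ A) ∪ A) - M.r A) - (M.r (C' ∪ A) - M.r A)) *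
              (0 - 1:ℤ) ^ (C'.card - (M.r (C' ∪ A) - M.r A))) := by
          rw [tutteSum, tutteSum, Finset.sum_mul_sum]
      _ = ∑ B ∈ A.powerset, ∑ C' ∈ (M.E \ A).powerset,
            (-1:ℤ)^A.card * g B (C' ∪ A) := by
          refine Finset.sum_congr rfl fun B hB => Finset.sum_congr rfl fun C' hC' => ?_
          rw [Finset.mem_powerset] at hB hC'
          have hUA : C' ∪ A ⊆ M.E :=
            Finset.union_subset ((hC'.trans Finset.sdiff_subset)) hA
          have hba : M.r B ≤ M.r A := M.r_mono (hB) hA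
          have hac : M.r A ≤ M.r (C' ∪ A) := M.r_mono Finset.subset_union_right hUA
          have hce : M.r (C' ∪ A) ≤ M.r M.E := M.r_mono hUA (Finset.Subset.refl _)
          have hnull : M.r (C' ∪ A) - M.r A ≤ C'.card := by
            have := M.r_union_le_add_card C' (hC'.trans Finset.sdiff_subset) A hA
            rw [Finset.union_comm] at this
            omega
          have hexp : (M.r ((M.E \ A) ∪ A) - M.r A) - (M.r (C' ∪ A) - M.r A)
              = M.r M.E - M.r (C' ∪ A) := by
            rw [Finset.sdiff_union_of_subset hA]
            exact tsub_tsub_tsub_cancel_right hac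
          have hcard : (C' ∪ A).card = C'.card + A.card :=
            Finset.card_union_of_disjoint (Finset.sdiff_disjoint.mono_left hC')
          rw [hexp, hg]
          simp only []
          rw [hcard]
          calc ((0 - 1:ℤ) ^ (M.r A - M.r B) * (y - 1) ^ (B.card - M.r B)) *
                ((x - 1) ^ (M.r M.E - M.r (C' ∪ A)) *
                  (0 - 1:ℤ) ^ (C'.card - (M.r (C' ∪ A) - M.r A)))
              = (-1:ℤ)^((M.r A - M.r B) + (C'.card - (M.r (C' ∪ A) - M.r A))) *
                ((y - 1) ^ (B.card - M.r B) * (x - 1) ^ (M.r M.E - M.r (C' ∪ A))) := by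
                rw [pow_add]; ring
            _ = (-1:ℤ)^(A.card + (M.r B + M.r (C' ∪ A) + (C'.card + A.card))) *
                ((y - 1) ^ (B.card - M.r B) * (x - 1) ^ (M.r M.E - M.r (C' ∪ A))) := by
                rw [neg_one_pow_congr_mod2
                  (n := (M.r A - M.r B) + (C'.card - (M.r (C' ∪ A) - M.r A)))
                  (m := A.card + (M.r B + M.r (C' ∪ A) + (C'.card + A.card))) (by omega)]
            _ = (-1:ℤ)^A.card * ((-1:ℤ)^(M.r B + M.r (C' ∪ A) + (C'.card + A.card)) *
                ((y - 1) ^ (B.card - M.r B) * (x - 1) ^ (M.r M.E - M.r (C' ∪ A)))) := by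
                rw [pow_add]; ring
      _ = ∑ B ∈ A.powerset, ∑ C ∈ M.E.powerset.filter (fun C => A ⊆ C),
            (-1:ℤ)^A.card * g B C := by
          refine Finset.sum_congr rfl fun B _ => ?_
          refine Finset.sum_nbij' (fun C' => C' ∪ A) (fun C => C \ A) ?_ ?_ ?_ ?_ ?_
          · intro C' hC'
            rw [Finset.mem_powerset] at hC'
            exact Finset.mem_filter.2 ⟨Finset.mem_powerset.2
              (Finset.union_subset (hC'.trans Finset.sdiff_subset) hA),
              Finset.subset_union_right⟩
          · intro C hC
            rw [Finset.mem_filter, Finset.mem_powerset] at hC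
            exact Finset.mem_powerset.2 (Finset.sdiff_subset_sdiff hC.1 le_rfl)
          · intro C' hC'
            rw [Finset.mem_powerset] at hC'
            exact Finset.union_sdiff_cancel_right (Finset.sdiff_disjoint.mono_left hC')
          · intro C hC
            rw [Finset.mem_filter] at hC
            exact Finset.sdiff_union_of_subset hC.2
          · intro C' _
            rfl
      _ = ∑ B ∈ M.E.powerset, ∑ C ∈ M.E.powerset,
            (if B ⊆ A ∧ A ⊆ C then (-1:ℤ)^A.card * g B C else 0) := by
          rw [← powerset_filter_subset hA, Finset.sum_filter]
          refine Finset.sum_congr rfl fun B _ => ?_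
          by_cases hB : B ⊆ A
          · rw [if_pos hB, Finset.sum_filter]
            refine Finset.sum_congr rfl fun C _ => ?_
            by_cases hC : A ⊆ C
            · rw [if_pos hC, if_pos ⟨hB, hC⟩]
            · rw [if_neg hC, if_neg (fun h => hC h.2)]
          · rw [if_neg hB]
            exact (Finset.sum_eq_zero fun C _ => if_neg (fun h => hB h.1)).symm
  rw [Finset.sum_congr rfl key, Finset.sum_comm]
  have inner : ∀ B ∈ M.E.powerset,
      (∑ A ∈ M.E.powerset, ∑ C ∈ M.E.powerset,
        (if B ⊆ A ∧ A ⊆ C then (-1:ℤ)^A.card * g B C else 0))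
      = (x - 1) ^ (M.r M.E - M.r B) * (y - 1) ^ (B.card - M.r B) := by
    intro B hB
    rw [Finset.sum_comm]
    have step : ∀ C ∈ M.E.powerset,
        (∑ A ∈ M.E.powerset, (if B ⊆ A ∧ A ⊆ C then (-1:ℤ)^A.card * g B C else 0))
        = if B = C then (-1:ℤ)^B.card * g B C else 0 := by
      intro C hC
      rw [Finset.mem_powerset] at hC
      have : ∀ A ∈ M.E.powerset,
          (if B ⊆ A ∧ A ⊆ C then (-1:ℤ)^A.card * g B C else 0)
          = (if B ⊆ A ∧ A ⊆ C then (-1:ℤ)^A.card else 0) * g B C := by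
        intro A _
        by_cases h : B ⊆ A ∧ A ⊆ C
        · rw [if_pos h, if_pos h]
        · rw [if_neg h, if_neg h, zero_mul]
      rw [Finset.sum_congr rfl this, ← Finset.sum_mul, alt_sum' hC]
      by_cases h : B = C
      · rw [if_pos h, if_pos h]
      · rw [if_neg h, if_neg h, zero_mul]
    rw [Finset.sum_congr rfl step, Finset.sum_ite_eq M.E.powerset B
      (fun C => (-1:ℤ)^B.card * g B C), if_pos hB]
    rw [Finset.mem_powerset] at hB
    have hre : M.r B ≤ M.r M.E := M.r_mono hB (Finset.Subset.refl _)
    rw [hg]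
    simp only []
    calc (-1:ℤ)^B.card * ((-1:ℤ)^(M.r B + M.r B + B.card) *
          ((y - 1) ^ (B.card - M.r B) * (x - 1) ^ (M.r M.E - M.r B)))
        = (-1:ℤ)^(B.card + (M.r B + M.r B + B.card)) *
          ((y - 1) ^ (B.card - M.r B) * (x - 1) ^ (M.r M.E - M.r B)) := by
          rw [pow_add]; ring
      _ = (x - 1) ^ (M.r M.E - M.r B) * (y - 1) ^ (B.card - M.r B) := by
          rw [neg_one_pow_congr_mod2 (n := B.card + (M.r B + M.r B + B.card)) (m := 0) (by omega)]
          ring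
  rw [Finset.sum_congr rfl inner, tutteSum]
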